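/- For every integer n ≥ 0, the total weight of the set T_n of weighted bicolored Motzkin paths equals R_n(t,q): ρ(T_n) = R_n(t,q) in ℤ[t,q]. -/
import Mathlib


open Finset Polynomial

/-- A step of a bicolored Motzkin path: up, down, straight level, wavy level. -/
inductive MStep where
  | U : MStep
  | D : MStep
  | L : MStep
  | W : MStep
deriving DecidableEq

/-- A weighted bicolored Motzkin path of length `n`: a sequence of steps together
with, for each step, the pair `(b, c)` of exponents of its monomial weight
`t^b q^c`. -/
structure WPath (n : ℕ) where
  step : Fin n → MStep
  wt : Fin n → ℕ × ℕ

/-- The height increment of a step. -/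
def dh : MStep → ℤ
  | MStep.U => 1
  | MStep.D => -1
  | MStep.L => 0
  | MStep.W => 0

/-- The height (of the starting point) of the `j`-th step; `ht μ n` is the final
height. -/
def ht {n : ℕ} (μ : WPath n) (j : ℕ) : ℤ :=
  ∑ k ∈ Finset.range j, if h : k < n then dh (μ.step ⟨k, h⟩) else 0

/-- The underlying path is a Motzkin path: stays weakly above the `x`-axis and
ends on it. -/
def IsMotzkin {n : ℕ} (μ : WPath n) : Prop :=
  (∀ j ≤ n, 0 ≤ ht μ j) ∧ ht μ n = 0

/-- The weight `ρ(μ)`: the product of the step weights `t^b q^c`, as an element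
of `ℤ[t,q]` (realized as `ℤ[q][t]`, `t` the outer variable). -/
noncomputable def rho {n : ℕ} (μ : WPath n) : Polynomial (Polynomial ℤ) :=
  ∏ j : Fin n, Polynomial.C (Polynomial.X ^ (μ.wt j).2) * Polynomial.X ^ (μ.wt j).1

/-- `[m]_q = 1 + q + ⋯ + q^(m-1)` in `ℤ[q]`. -/
noncomputable def qnat (m : ℕ) : Polynomial ℤ := ∑ i ∈ Finset.range m, Polynomial.X ^ i

/-- The `q`-derivative `D` on `ℤ[q][t]` (outer variable `t`, inner variable `q`),
the `ℤ[q]`-linear operator with `D(t^m) = [m]_q t^(m-1)`. -/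
noncomputable def opD (f : Polynomial (Polynomial ℤ)) : Polynomial (Polynomial ℤ) :=
  f.sum fun m c => Polynomial.C (c * qnat m) * Polynomial.X ^ (m - 1)

/-- The operator `U`: multiplication by `t` on `ℤ[q][t]`. -/
noncomputable def opU (f : Polynomial (Polynomial ℤ)) : Polynomial (Polynomial ℤ) :=
  Polynomial.X * f

/-- `R_n(t,q) = (D + DUU)^n 1`. -/
noncomputable def Rpoly (n : ℕ) : Polynomial (Polynomial ℤ) :=
  (fun f => opD f + opD (opU (opU f)))^[n] 1

/-- `Q_n(t,q) = (D + UDU)^n 1`. -/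
noncomputable def Qpoly (n : ℕ) : Polynomial (Polynomial ℤ) :=
  (fun f => opD f + opU (opD (opU f)))^[n] 1

/-- `μ ∈ T_n`: a weighted bicolored Motzkin path whose weights satisfy, at each
step of height `h`: up steps carry `q^c` with `c ≤ h` or `t²q^c` with
`2h+2 ≤ c ≤ 3h+2`; straight level steps carry `tq^c` with `h+1 ≤ c ≤ 2h+1`; wavy
level steps carry `tq^c` with `h ≤ c ≤ 2h`; down steps at height `h+1` carry
`q^c` with `c ≤ h+1`. -/
def Tcond {n : ℕ} (μ : WPath n) : Prop :=
  IsMotzkin μ ∧ ∀ j : Fin n,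
    (μ.step j = MStep.U →
      ((μ.wt j).1 = 0 ∧ ((μ.wt j).2 : ℤ) ≤ ht μ j) ∨
      ((μ.wt j).1 = 2 ∧ 2 * ht μ j + 2 ≤ ((μ.wt j).2 : ℤ) ∧
        ((μ.wt j).2 : ℤ) ≤ 3 * ht μ j + 2)) ∧
    (μ.step j = MStep.L →
      (μ.wt j).1 = 1 ∧ ht μ j + 1 ≤ ((μ.wt j).2 : ℤ) ∧ ((μ.wt j).2 : ℤ) ≤ 2 * ht μ j + 1) ∧
    (μ.step j = MStep.W →
      (μ.wt j).1 = 1 ∧ ht μ j ≤ ((μ.wt j).2 : ℤ) ∧ ((μ.wt j).2 : ℤ) ≤ 2 * ht μ j) ∧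
    (μ.step j = MStep.D →
      (μ.wt j).1 = 0 ∧ ((μ.wt j).2 : ℤ) ≤ ht μ j)

lemma qnat_zero : qnat 0 = 0 := by simp [qnat]
lemma qnat_one : qnat 1 = 1 := by simp [qnat]
lemma qnat_add (a b : ℕ) : qnat (a + b) = qnat a + X ^ a * qnat b := by
  simp [qnat, Finset.sum_range_add, Finset.mul_sum, pow_add]

lemma qnat_ne_zero (k : ℕ) : qnat (k + 1) ≠ 0 := by
  intro h
  have := congrArg (Polynomial.eval 1) h
  simp [qnat, Polynomial.eval_finset_sum] at this
  omega

noncomputable def qfact : ℕ → Polynomial ℤ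
  | 0 => 1
  | n + 1 => qnat (n + 1) * qfact n

lemma qfact_succ (n : ℕ) : qfact (n + 1) = qnat (n + 1) * qfact n := rfl

lemma qfact_ne_zero (n : ℕ) : qfact n ≠ 0 := by
  induction n with
  | zero => simp [qfact]
  | succ n ih => exact mul_ne_zero (qnat_ne_zero n) ih

noncomputable def qbinom : ℕ → ℕ → Polynomial ℤ
  | _, 0 => 1
  | 0, _ + 1 => 0
  | m + 1, h + 1 => qbinom m h + X ^ (h + 1) * qbinom m (h + 1)

lemma qbinom_zero_right (m : ℕ) : qbinom m 0 = 1 := by cases m <;> rfl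
lemma qbinom_zero_left (h : ℕ) : qbinom 0 (h + 1) = 0 := rfl
lemma qbinom_pascal (m h : ℕ) :
    qbinom (m + 1) (h + 1) = qbinom m h + X ^ (h + 1) * qbinom m (h + 1) := rfl

lemma qbinom_eq_zero : ∀ m h : ℕ, m < h → qbinom m h = 0
  | 0, _ + 1, _ => rfl
  | m + 1, h + 1, hlt => by
    rw [qbinom_pascal, qbinom_eq_zero m h (by omega), qbinom_eq_zero m (h+1) (by omega)]
    ring

lemma qbinom_self : ∀ m : ℕ, qbinom m m = 1
  | 0 => rfl
  | m + 1 => by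
    rw [qbinom_pascal, qbinom_self m, qbinom_eq_zero m (m+1) (by omega)]
    ring

lemma qbinom_one_right : ∀ m : ℕ, qbinom m 1 = qnat m
  | 0 => by rw [qbinom_zero_left, qnat_zero]
  | m + 1 => by
    rw [qbinom_pascal, qbinom_one_right m, qbinom_zero_right,
      show m + 1 = 1 + m from by omega, qnat_add, qnat_one, pow_one]

lemma qbinom_succ_self : ∀ m : ℕ, qbinom (m + 1) m = qnat (m + 1)
  | 0 => by rw [qbinom_zero_right, qnat_one]
  | m + 1 => by
    rw [qbinom_pascal, qbinom_succ_self m, qbinom_self, qnat_add (m+1) 1, qnat_one]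

lemma qbinom_mul_qfact : ∀ h k : ℕ, qbinom (h + k) h * (qfact h * qfact k) = qfact (h + k)
  | 0, k => by simp [qbinom_zero_right, qfact]
  | h + 1, 0 => by simp [qbinom_self, qfact]
  | h + 1, k + 1 => by
    have IH1 := qbinom_mul_qfact h (k + 1)
    have IH2 := qbinom_mul_qfact (h + 1) k
    simp only [show h + (k+1) = h + k + 1 from by omega,
      show h + 1 + k = h + k + 1 from by omega,
      show h + 1 + (k + 1) = (h + k + 1) + 1 from by omega] at *
    rw [qbinom_pascal]
    have r1 : qfact (h+1) = qnat (h+1) * qfact h := rfl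
    have r2 : qfact (k+1) = qnat (k+1) * qfact k := rfl
    have r3 : qfact (h+k+1+1) = qnat (h+k+2) * qfact (h+k+1) := by
      rw [qfact_succ]
    have r4 : qnat (h+k+2) = qnat (h+1) + X^(h+1) * qnat (k+1) := by
      rw [show h+k+2 = (h+1)+(k+1) from by omega, qnat_add]
    calc (qbinom (h+k+1) h + X ^ (h+1) * qbinom (h+k+1) (h+1)) * (qfact (h+1) * qfact (k+1))
        = qnat (h+1) * (qbinom (h+k+1) h * (qfact h * qfact (k+1)))
          + (X^(h+1) * qnat (k+1)) * (qbinom (h+k+1) (h+1) * (qfact (h+1) * qfact k)) := by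
          rw [r1, r2]; ring
      _ = qnat (h+1) * qfact (h+k+1) + (X^(h+1) * qnat (k+1)) * qfact (h+k+1) := by
          rw [IH1, IH2]
      _ = qfact (h+k+1+1) := by rw [r3, r4]; ring

lemma I1 (m h : ℕ) : qnat (h+1) * qbinom m (h+1) = qnat m * qbinom (m-1) h := by
  cases m with
  | zero => rw [qbinom_zero_left, qnat_zero]; ring
  | succ m' =>
    simp only [Nat.add_sub_cancel]
    rcases lt_or_ge m' h with hlt | hge
    · rw [qbinom_eq_zero m' h hlt, qbinom_eq_zero (m'+1) (h+1) (by omega)]; ring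
    · obtain ⟨k, rfl⟩ := Nat.exists_eq_add_of_le hge
      have hF : qfact h * qfact k ≠ 0 := mul_ne_zero (qfact_ne_zero h) (qfact_ne_zero k)
      apply mul_right_cancel₀ hF
      have E1 := qbinom_mul_qfact (h+1) k
      have E2 := qbinom_mul_qfact h k
      calc qnat (h+1) * qbinom (h+k+1) (h+1) * (qfact h * qfact k)
          = qbinom (h+1+k) (h+1) * (qfact (h+1) * qfact k) := by
            rw [qfact_succ, show h+1+k = h+k+1 from by omega]; ring
        _ = qfact (h+1+k) := E1
        _ = qnat (h+k+1) * qbinom (h+k) h * (qfact h * qfact k) := by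
            rw [show h+1+k = h+k+1 from by omega, qfact_succ, ← E2]; ring

lemma J2 (h k : ℕ) : qnat (h+k+2) * qnat (h+k+1) =
    X^(2*h+2) * qnat (k+1) * qnat k + X^h * (1+X) * qnat (h+1) * qnat (k+1)
      + qnat (h+1) * qnat h := by
  have e1 : qnat (h+k+2) = qnat (h+1) + X^(h+1) * qnat (k+1) := by
    rw [show h+k+2 = (h+1)+(k+1) from by omega, qnat_add]
  have e2 : qnat (h+k+1) = qnat h + X^h * qnat (k+1) := by
    rw [show h+k+1 = h+(k+1) from by omega, qnat_add]
  have e3 : qnat (k+1) = 1 + X * qnat k := by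
    rw [show k+1 = 1+k from by omega, qnat_add, qnat_one, pow_one]
  have e4 : qnat (h+1) = qnat h + X^h := by
    rw [qnat_add, qnat_one, mul_one]
  rw [e1, e2, e3, e4]; ring

lemma I2 (h j : ℕ) :
    qnat (h+j+4) * qbinom (h+j+3) (h+1) =
      X^(2*h+4) * qnat (h+2) * qbinom (h+j+2) (h+2)
      + X^(h+1) * (1+X) * qnat (h+2) * qbinom (h+j+2) (h+1)
      + qnat (h+2) * qbinom (h+j+2) h := by
  have hF : qnat (h+2) * (qfact (h+1) * qfact (j+2)) ≠ 0 :=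
    mul_ne_zero (qnat_ne_zero _) (mul_ne_zero (qfact_ne_zero _) (qfact_ne_zero _))
  apply mul_right_cancel₀ hF
  have r1 : qfact (h+2) = qnat (h+2) * qfact (h+1) := rfl
  have r2 : qfact (j+2) = qnat (j+2) * qfact (j+1) := rfl
  have r3 : qfact (j+1) = qnat (j+1) * qfact j := rfl
  have r4 : qfact (h+1) = qnat (h+1) * qfact h := rfl
  have r5 : qfact (h+j+3) = qnat (h+j+3) * qfact (h+j+2) := rfl
  have E1 := qbinom_mul_qfact (h+1) (j+2)
  rw [show h+1+(j+2) = h+j+3 from by omega, r4, r2, r3] at E1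
  have E2 := qbinom_mul_qfact (h+2) j
  rw [show h+2+j = h+j+2 from by omega, r1, r4] at E2
  have E3 := qbinom_mul_qfact (h+1) (j+1)
  rw [show h+1+(j+1) = h+j+2 from by omega, r4, r3] at E3
  have E4 := qbinom_mul_qfact h (j+2)
  rw [show h+(j+2) = h+j+2 from by omega, r2, r3] at E4
  have hJ := J2 (h+1) (j+1)
  rw [show h+1+(j+1)+2 = h+j+4 from by omega, show h+1+(j+1)+1 = h+j+3 from by omega,
    show 2*(h+1)+2 = 2*h+4 from by omega, show j+1+1 = j+2 from by omega,
    show h+1+1 = h+2 from by omega] at hJ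
  rw [r2, r3, r4]
  linear_combination (qnat (h+j+4) * qnat (h+2)) * E1 + (qnat (h+j+4) * qnat (h+2)) * r5
    + (qnat (h+2) * qfact (h+j+2)) * hJ
    - (X^(2*h+4) * qnat (h+2) * qnat (j+2) * qnat (j+1)) * E2
    - (X^(h+1)*(1+X) * qnat (h+2)^2 * qnat (j+2)) * E3
    - (qnat (h+2)^2 * qnat (h+1)) * E4

noncomputable def wUp (H : ℕ) : Polynomial (Polynomial ℤ) :=
  C (qnat (H+1)) + C (X^(2*H+2) * qnat (H+1)) * X^2
noncomputable def wStr (H : ℕ) : Polynomial (Polynomial ℤ) :=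
  C (X^(H+1) * qnat (H+1)) * X
noncomputable def wWav (H : ℕ) : Polynomial (Polynomial ℤ) :=
  C (X^H * qnat (H+1)) * X
noncomputable def wLev (H : ℕ) : Polynomial (Polynomial ℤ) := wStr H + wWav H

noncomputable def vv : ℕ → ℕ → Polynomial (Polynomial ℤ)
  | 0, H => if H = 0 then 1 else 0
  | n+1, 0 => wUp 0 * vv n 1 + wLev 0 * vv n 0
  | n+1, H'+1 => wUp (H'+1) * vv n (H'+2) + wLev (H'+1) * vv n (H'+1)
      + C (qnat (H'+2)) * vv n H'

-- ## step-weight condition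
def wcond (s : MStep) (h : ℤ) (w : ℕ × ℕ) : Prop :=
  match s with
  | MStep.U => (w.1 = 0 ∧ (w.2 : ℤ) ≤ h) ∨
      (w.1 = 2 ∧ 2 * h + 2 ≤ (w.2 : ℤ) ∧ (w.2 : ℤ) ≤ 3 * h + 2)
  | MStep.L => w.1 = 1 ∧ h + 1 ≤ (w.2 : ℤ) ∧ (w.2 : ℤ) ≤ 2 * h + 1
  | MStep.W => w.1 = 1 ∧ h ≤ (w.2 : ℤ) ∧ (w.2 : ℤ) ≤ 2 * h
  | MStep.D => w.1 = 0 ∧ (w.2 : ℤ) ≤ h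

def Gcond (n H : ℕ) (μ : WPath n) : Prop :=
  (∀ j ≤ n, (0:ℤ) ≤ (H:ℤ) + ht μ j) ∧ ((H:ℤ) + ht μ n = 0) ∧
    ∀ j : Fin n, wcond (μ.step j) ((H:ℤ) + ht μ j) (μ.wt j)

lemma Tcond_iff {n : ℕ} (μ : WPath n) : Tcond μ ↔ Gcond n 0 μ := by
  unfold Tcond Gcond IsMotzkin
  simp only [Nat.cast_zero, zero_add]
  constructor
  · rintro ⟨⟨h1, h2⟩, h3⟩
    refine ⟨h1, h2, fun j => ?_⟩
    obtain ⟨hU, hL, hW, hD⟩ := h3 j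
    cases hs : μ.step j
    · exact hU hs
    · exact hD hs
    · exact hL hs
    · exact hW hs
  · rintro ⟨h1, h2, h3⟩
    refine ⟨⟨h1, h2⟩, fun j => ?_⟩
    have hj := h3 j
    exact ⟨fun h => by rw [h] at hj; exact hj, fun h => by rw [h] at hj; exact hj,
      fun h => by rw [h] at hj; exact hj, fun h => by rw [h] at hj; exact hj⟩

-- ## ht lemmas
lemma ht_zero {n : ℕ} (μ : WPath n) : ht μ 0 = 0 := by simp [ht]

lemma ht_le {n : ℕ} (μ : WPath n) (j : ℕ) : ht μ j ≤ j := by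
  induction j with
  | zero => simp [ht_zero]
  | succ j ih =>
    rw [ht, Finset.sum_range_succ, ← ht]
    have : (if h : j < n then dh (μ.step ⟨j, h⟩) else 0) ≤ 1 := by
      split
      · rename_i h; cases μ.step ⟨j, h⟩ <;> simp [dh]
      · norm_num
    push_cast
    omega

def consP {n : ℕ} (s : MStep) (w : ℕ × ℕ) (ν : WPath n) : WPath (n+1) :=
  ⟨Fin.cons s ν.step, Fin.cons w ν.wt⟩

def tailP {n : ℕ} (μ : WPath (n+1)) : WPath n :=
  ⟨fun j => μ.step j.succ, fun j => μ.wt j.succ⟩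

lemma consP_eta {n : ℕ} (μ : WPath (n+1)) : consP (μ.step 0) (μ.wt 0) (tailP μ) = μ := by
  cases μ with
  | mk st wt =>
    unfold consP tailP
    congr 1 <;> exact Fin.cons_self_tail _

lemma consP_step_zero {n : ℕ} (s : MStep) (w : ℕ × ℕ) (ν : WPath n) :
    (consP s w ν).step 0 = s := rfl

lemma ht_consP {n : ℕ} (s : MStep) (w : ℕ × ℕ) (ν : WPath n) (j : ℕ) (hj : j ≤ n) :
    ht (consP s w ν) (j+1) = dh s + ht ν j := by
  rw [ht, Finset.sum_range_succ', ht]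
  have h0 : (if h : 0 < n + 1 then dh ((consP s w ν).step ⟨0, h⟩) else 0) = dh s := by
    rw [dif_pos (Nat.succ_pos n)]
    rfl
  rw [h0, add_comm]
  congr 1
  apply Finset.sum_congr rfl
  intro k hk
  rw [Finset.mem_range] at hk
  rw [dif_pos (by omega : k + 1 < n + 1), dif_pos (by omega : k < n)]
  rfl

lemma rho_consP {n : ℕ} (s : MStep) (w : ℕ × ℕ) (ν : WPath n) :
    rho (consP s w ν) = (C (X ^ w.2) * X ^ w.1) * rho ν := by
  rw [rho, Fin.prod_univ_succ, rho]
  rfl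

lemma Gcond_consP {n H H' : ℕ} {s : MStep} {w : ℕ × ℕ} {ν : WPath n}
    (hH : (H' : ℤ) = (H : ℤ) + dh s) :
    Gcond (n+1) H (consP s w ν) ↔ wcond s H w ∧ Gcond n H' ν := by
  have hc : ∀ j ≤ n, ht (consP s w ν) (j+1) = dh s + ht ν j := fun j hj => ht_consP s w ν j hj
  constructor
  · rintro ⟨h1, h2, h3⟩
    have hw := h3 0
    rw [show ((0 : Fin (n+1)) : ℕ) = 0 from rfl, ht_zero] at hw
    have hw' : wcond s ((H:ℤ)) w := by
      have : (H:ℤ) + 0 = (H:ℤ) := by ring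
      rw [this] at hw
      exact hw
    refine ⟨hw', ?_, ?_, ?_⟩
    · intro j hj
      have := h1 (j+1) (by omega)
      rw [hc j hj] at this
      omega
    · have := h2
      rw [hc n le_rfl] at this
      omega
    · intro j
      have hj := h3 j.succ
      rw [show ((j.succ : Fin (n+1)) : ℕ) = (j:ℕ) + 1 from rfl,
        hc j (by omega)] at hj
      have harg : (H:ℤ) + (dh s + ht ν j) = (H':ℤ) + ht ν j := by omega
      rw [harg] at hj
      exact hj
  · rintro ⟨hw, g1, g2, g3⟩
    refine ⟨?_, ?_, ?_⟩
    · intro j hj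
      cases j with
      | zero => rw [ht_zero]; positivity
      | succ i =>
        have := g1 i (by omega)
        rw [hc i (by omega)]
        omega
    · rw [hc n le_rfl]; omega
    · intro j
      induction j using Fin.cases with
      | zero =>
        rw [show ((0 : Fin (n+1)) : ℕ) = 0 from rfl, ht_zero]
        have : (H:ℤ) + 0 = (H:ℤ) := by ring
        rw [this]
        exact hw
      | succ i =>
        have hj := g3 i
        rw [show ((i.succ : Fin (n+1)) : ℕ) = (i:ℕ) + 1 from rfl, hc i (by omega)]
        have harg : (H:ℤ) + (dh s + ht ν i) = (H':ℤ) + ht ν i := by omega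
        rw [harg]
        exact hj

lemma Gcond_consP_D_zero {n : ℕ} {w : ℕ × ℕ} {ν : WPath n} :
    ¬ Gcond (n+1) 0 (consP MStep.D w ν) := by
  rintro ⟨h1, -, -⟩
  have := h1 1 (by omega)
  rw [ht_consP _ _ _ 0 (by omega), ht_zero] at this
  simp [dh] at this

-- ## finiteness
instance : Fintype MStep :=
  ⟨{MStep.U, MStep.D, MStep.L, MStep.W}, by intro x; cases x <;> decide⟩

def TS (n H : ℕ) : Set (WPath n) := {μ | Gcond n H μ}

lemma TS_finite (n H : ℕ) : (TS n H).Finite := by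
  classical
  set M := 3 * (H + n) + 3 with hM
  let g : ((Fin n → MStep) × (Fin n → Fin 3 × Fin M)) → WPath n :=
    fun p => ⟨p.1, fun j => ((p.2 j).1, (p.2 j).2)⟩
  apply Set.Finite.subset (Set.finite_range g)
  intro μ hμ
  obtain ⟨h1, h2, h3⟩ := hμ
  have hb : ∀ j : Fin n, (μ.wt j).1 < 3 ∧ (μ.wt j).2 < M := by
    intro j
    have hw := h3 j
    have hht : (0:ℤ) ≤ (H:ℤ) + ht μ j := h1 j (by omega)
    have hle : ht μ (j:ℕ) ≤ (j:ℕ) := ht_le μ j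
    have hjn : ((j:ℕ):ℤ) ≤ (n:ℤ) := by exact_mod_cast Nat.le_of_lt j.isLt
    cases hs : μ.step j <;> rw [hs] at hw
    · rcases hw with ⟨hw1, hw2⟩ | ⟨hw1, hw2, hw3⟩ <;> constructor <;> omega
    · obtain ⟨hw1, hw2⟩ := hw; constructor <;> omega
    · obtain ⟨hw1, hw2, hw3⟩ := hw; constructor <;> omega
    · obtain ⟨hw1, hw2, hw3⟩ := hw; constructor <;> omega
  refine ⟨⟨μ.step, fun j => (⟨(μ.wt j).1, (hb j).1⟩, ⟨(μ.wt j).2, (hb j).2⟩)⟩, ?_⟩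
  show WPath.mk _ _ = μ
  cases μ
  simp [g]

lemma tailP_consP {n : ℕ} (s : MStep) (w : ℕ × ℕ) (ν : WPath n) :
    tailP (consP s w ν) = ν := by
  cases ν
  unfold tailP consP
  congr 1 <;> funext j <;> simp [Fin.cons_succ]

lemma bijOn_cons {n H H' : ℕ} {s : MStep} (hH : (H' : ℤ) = (H : ℤ) + dh s) :
    Set.BijOn (fun p : (ℕ × ℕ) × WPath n => consP s p.1 p.2)
      (({w | wcond s (H:ℤ) w}) ×ˢ TS n H') (TS (n+1) H ∩ {μ | μ.step 0 = s}) := by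
  refine ⟨?_, ?_, ?_⟩
  · rintro ⟨w, ν⟩ ⟨hw, hν⟩
    exact ⟨(Gcond_consP hH).mpr ⟨hw, hν⟩, rfl⟩
  · rintro ⟨w, ν⟩ - ⟨w', ν'⟩ - h
    have hw : w = w' := congrArg (fun μ => μ.wt 0) h
    have hν : ν = ν' := by
      have := congrArg tailP h
      rwa [tailP_consP, tailP_consP] at this
    exact Prod.ext hw hν
  · rintro μ ⟨hμ, hs0⟩
    have heta : μ = consP s (μ.wt 0) (tailP μ) := by
      rw [← hs0]; exact (consP_eta μ).symm
    have hμ' : Gcond (n+1) H (consP s (μ.wt 0) (tailP μ)) := by rw [← heta]; exact hμ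
    obtain ⟨hw, hν⟩ := (Gcond_consP hH).mp hμ'
    exact ⟨(μ.wt 0, tailP μ), ⟨hw, hν⟩, heta.symm⟩

lemma finsum_mem_prod_mul {α β : Type*} (A : Set α) (B : Set β) (hA : A.Finite) (hB : B.Finite)
    (f : α → Polynomial (Polynomial ℤ)) (g : β → Polynomial (Polynomial ℤ)) :
    ∑ᶠ p ∈ A ×ˢ B, f p.1 * g p.2 = (∑ᶠ a ∈ A, f a) * ∑ᶠ b ∈ B, g b := by
  have h1 : A ×ˢ B = ↑(hA.toFinset ×ˢ hB.toFinset) := by simp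
  have h2 : A = ↑hA.toFinset := by simp
  have h3 : B = ↑hB.toFinset := by simp
  rw [h1, finsum_mem_coe_finset, Finset.sum_product,
    finsum_mem_eq_finite_toFinset_sum f hA, finsum_mem_eq_finite_toFinset_sum g hB,
    Finset.sum_mul_sum]

instance : Unique (WPath 0) where
  default := ⟨fun j => j.elim0, fun j => j.elim0⟩
  uniq := by
    intro μ
    cases μ
    congr 1 <;> funext j <;> exact j.elim0

lemma rho_zero (μ : WPath 0) : rho μ = 1 := by simp [rho]

lemma TS_zero_zero : TS 0 0 = Set.univ := by
  ext μ
  simp only [TS, Set.mem_setOf_eq, Set.mem_univ, iff_true, Gcond]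
  refine ⟨?_, ?_, ?_⟩
  · intro j hj
    interval_cases j
    rw [ht_zero]; norm_num
  · rw [ht_zero]; norm_num
  · intro j; exact j.elim0

lemma TS_zero_succ (H' : ℕ) : TS 0 (H'+1) = ∅ := by
  ext μ
  simp only [TS, Set.mem_setOf_eq, Set.mem_empty_iff_false, iff_false]
  rintro ⟨-, h2, -⟩
  rw [ht_zero] at h2
  omega

-- ## weight sums
lemma wset_U_eq (H : ℕ) : {w : ℕ × ℕ | wcond MStep.U (H:ℤ) w} =
    ↑((((Finset.range (H+1)).image fun c => ((0:ℕ), c)) ∪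
      ((Finset.range (H+1)).image fun c => ((2:ℕ), 2*H+2+c)))) := by
  ext ⟨b, c⟩
  simp only [Set.mem_setOf_eq, wcond, Finset.coe_union, Set.mem_union, Finset.coe_image,
    Set.mem_image, Finset.mem_coe, Finset.mem_range, Prod.mk.injEq]
  constructor
  · rintro (⟨hb, hc⟩ | ⟨hb, h1, h2⟩)
    · exact Or.inl ⟨c, by omega, by omega, rfl⟩
    · exact Or.inr ⟨c - (2*H+2), by omega, by omega, by omega⟩
  · rintro (⟨a, ha, hb, hc⟩ | ⟨a, ha, hb, hc⟩)
    · exact Or.inl ⟨hb.symm, by omega⟩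
    · exact Or.inr ⟨hb.symm, by omega, by omega⟩

lemma wset_L_eq (H : ℕ) : {w : ℕ × ℕ | wcond MStep.L (H:ℤ) w} =
    ↑((Finset.range (H+1)).image fun c => ((1:ℕ), H+1+c)) := by
  ext ⟨b, c⟩
  simp only [Set.mem_setOf_eq, wcond, Finset.coe_image, Set.mem_image, Finset.mem_coe,
    Finset.mem_range, Prod.mk.injEq]
  constructor
  · rintro ⟨hb, h1, h2⟩
    exact ⟨c - (H+1), by omega, hb.symm, by omega⟩
  · rintro ⟨a, ha, hb, hc⟩
    exact ⟨hb.symm, by omega, by omega⟩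

lemma wset_W_eq (H : ℕ) : {w : ℕ × ℕ | wcond MStep.W (H:ℤ) w} =
    ↑((Finset.range (H+1)).image fun c => ((1:ℕ), H+c)) := by
  ext ⟨b, c⟩
  simp only [Set.mem_setOf_eq, wcond, Finset.coe_image, Set.mem_image, Finset.mem_coe,
    Finset.mem_range, Prod.mk.injEq]
  constructor
  · rintro ⟨hb, h1, h2⟩
    exact ⟨c - H, by omega, hb.symm, by omega⟩
  · rintro ⟨a, ha, hb, hc⟩
    exact ⟨hb.symm, by omega, by omega⟩

lemma wset_D_eq (H : ℕ) : {w : ℕ × ℕ | wcond MStep.D (H:ℤ) w} =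
    ↑((Finset.range (H+1)).image fun c => ((0:ℕ), c)) := by
  ext ⟨b, c⟩
  simp only [Set.mem_setOf_eq, wcond, Finset.coe_image, Set.mem_image, Finset.mem_coe,
    Finset.mem_range, Prod.mk.injEq]
  constructor
  · rintro ⟨hb, h1⟩
    exact ⟨c, by omega, hb.symm, rfl⟩
  · rintro ⟨a, ha, hb, hc⟩
    exact ⟨hb.symm, by omega⟩

lemma sum_image_weight (a b e : ℕ) :
    ∑ w ∈ (Finset.range (a+1)).image (fun c => (e, b+c)), (C (X^w.2) * X^w.1
        : Polynomial (Polynomial ℤ)) = C (X^b * qnat (a+1)) * X^e := by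
  rw [Finset.sum_image (by intro x _ y _ h; simpa using h)]
  rw [qnat, Finset.mul_sum, map_sum, Finset.sum_mul]
  apply Finset.sum_congr rfl
  intro c hc
  rw [pow_add]

lemma sum_wset_U (H : ℕ) :
    ∑ᶠ w ∈ {w : ℕ × ℕ | wcond MStep.U (H:ℤ) w}, (C (X^w.2) * X^w.1
      : Polynomial (Polynomial ℤ)) = wUp H := by
  rw [wset_U_eq, finsum_mem_coe_finset, Finset.sum_union]
  · have h1 := sum_image_weight H 0 0
    have h2 := sum_image_weight H (2*H+2) 2
    simp only [zero_add] at h1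
    rw [h1, h2, wUp]
    simp
  · rw [Finset.disjoint_left]
    rintro ⟨b, c⟩ hb hc
    simp only [Finset.mem_image, Finset.mem_range, Prod.mk.injEq] at hb hc
    obtain ⟨a1, -, h1, -⟩ := hb
    obtain ⟨a2, -, h2, -⟩ := hc
    omega

lemma sum_wset_L (H : ℕ) :
    ∑ᶠ w ∈ {w : ℕ × ℕ | wcond MStep.L (H:ℤ) w}, (C (X^w.2) * X^w.1
      : Polynomial (Polynomial ℤ)) = wStr H := by
  rw [wset_L_eq, finsum_mem_coe_finset, sum_image_weight H (H+1) 1, wStr, pow_one]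

lemma sum_wset_W (H : ℕ) :
    ∑ᶠ w ∈ {w : ℕ × ℕ | wcond MStep.W (H:ℤ) w}, (C (X^w.2) * X^w.1
      : Polynomial (Polynomial ℤ)) = wWav H := by
  rw [wset_W_eq, finsum_mem_coe_finset, sum_image_weight H H 1, wWav, pow_one]

lemma sum_wset_D (H : ℕ) :
    ∑ᶠ w ∈ {w : ℕ × ℕ | wcond MStep.D (H:ℤ) w}, (C (X^w.2) * X^w.1
      : Polynomial (Polynomial ℤ)) = C (qnat (H+1)) := by
  rw [wset_D_eq, finsum_mem_coe_finset]
  have := sum_image_weight H 0 0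
  simp only [zero_add] at this
  rw [this]
  simp

lemma key_cons (n H H' : ℕ) (s : MStep) (hH : (H' : ℤ) = (H : ℤ) + dh s)
    (hws : {w : ℕ × ℕ | wcond s (H:ℤ) w}.Finite) :
    ∑ᶠ μ ∈ TS (n+1) H ∩ {μ | μ.step 0 = s}, rho μ =
      (∑ᶠ w ∈ {w : ℕ × ℕ | wcond s (H:ℤ) w}, (C (X^w.2) * X^w.1
        : Polynomial (Polynomial ℤ))) * ∑ᶠ ν ∈ TS n H', rho ν := by
  rw [← finsum_mem_prod_mul _ _ hws (TS_finite n H')]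
  exact (finsum_mem_eq_of_bijOn _ (bijOn_cons hH)
    (fun p _ => (rho_consP s p.1 p.2).symm)).symm

lemma disj_steps (n H : ℕ) (s t : MStep) (hst : s ≠ t) :
    Disjoint (TS (n+1) H ∩ {μ | μ.step 0 = s}) (TS (n+1) H ∩ {μ | μ.step 0 = t}) := by
  rw [Set.disjoint_left]
  rintro μ ⟨-, h1⟩ ⟨-, h2⟩
  exact hst (by rw [← h1, ← h2])

lemma keyD_zero (n : ℕ) : TS (n+1) 0 ∩ {μ | μ.step 0 = MStep.D} = ∅ := by
  ext μ
  simp only [Set.mem_inter_iff, Set.mem_empty_iff_false, iff_false, not_and]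
  intro hμ hs0
  have heta : μ = consP MStep.D (μ.wt 0) (tailP μ) := by
    rw [← hs0]; exact (consP_eta μ).symm
  rw [TS, Set.mem_setOf_eq, heta] at hμ
  exact Gcond_consP_D_zero hμ

lemma sum_TS : ∀ n H : ℕ, ∑ᶠ μ ∈ TS n H, rho μ = vv n H := by
  intro n
  induction n with
  | zero =>
    intro H
    cases H with
    | zero =>
      have huniv : (Set.univ : Set (WPath 0)) = {default} := by
        ext μ; simp [Unique.eq_default μ]
      rw [TS_zero_zero, huniv, finsum_mem_singleton, rho_zero]
      simp [vv]
    | succ H' =>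
      rw [TS_zero_succ, finsum_mem_empty]
      simp [vv]
  | succ n ih =>
    intro H
    have hwU : {w : ℕ × ℕ | wcond MStep.U (H:ℤ) w}.Finite := by
      rw [wset_U_eq]; exact Finset.finite_toSet _
    have hwL : {w : ℕ × ℕ | wcond MStep.L (H:ℤ) w}.Finite := by
      rw [wset_L_eq]; exact Finset.finite_toSet _
    have hwW : {w : ℕ × ℕ | wcond MStep.W (H:ℤ) w}.Finite := by
      rw [wset_W_eq]; exact Finset.finite_toSet _
    have hwD : {w : ℕ × ℕ | wcond MStep.D (H:ℤ) w}.Finite := by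
      rw [wset_D_eq]; exact Finset.finite_toSet _
    have hfin : ∀ s : MStep, (TS (n+1) H ∩ {μ | μ.step 0 = s}).Finite :=
      fun s => (TS_finite (n+1) H).subset Set.inter_subset_left
    have part : TS (n+1) H =
        ((TS (n+1) H ∩ {μ | μ.step 0 = MStep.U}) ∪ (TS (n+1) H ∩ {μ | μ.step 0 = MStep.L})) ∪
        ((TS (n+1) H ∩ {μ | μ.step 0 = MStep.W}) ∪ (TS (n+1) H ∩ {μ | μ.step 0 = MStep.D})) := by
      ext μ
      simp only [Set.mem_union, Set.mem_inter_iff, Set.mem_setOf_eq]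
      constructor
      · intro h; cases hs : μ.step 0 <;> tauto
      · tauto
    have keyU := key_cons n H (H+1) MStep.U (by simp [dh]) hwU
    have keyL := key_cons n H H MStep.L (by simp [dh]) hwL
    have keyW := key_cons n H H MStep.W (by simp [dh]) hwW
    rw [sum_wset_U, ih] at keyU
    rw [sum_wset_L, ih] at keyL
    rw [sum_wset_W, ih] at keyW
    rw [part,
      finsum_mem_union (by
          apply Set.disjoint_union_left.mpr
          constructor <;> apply Set.disjoint_union_right.mpr <;>
          · constructor
            · apply disj_steps; decide
            · apply disj_steps; decide)
        ((hfin _).union (hfin _)) ((hfin _).union (hfin _)),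
      finsum_mem_union (disj_steps n H MStep.U MStep.L (by decide)) (hfin _) (hfin _),
      finsum_mem_union (disj_steps n H MStep.W MStep.D (by decide)) (hfin _) (hfin _),
      keyU, keyL, keyW]
    cases H with
    | zero =>
      rw [keyD_zero, finsum_mem_empty, vv, wLev]
      ring
    | succ H' =>
      have keyD := key_cons n (H'+1) H' MStep.D (by simp [dh]) hwD
      rw [sum_wset_D, ih] at keyD
      rw [keyD, vv, wLev]
      ring

-- ψ maps
noncomputable def psi (H : ℕ) (f : Polynomial (Polynomial ℤ)) : Polynomial (Polynomial ℤ) :=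
  f.sum fun m c => C (c * qbinom m H) * X ^ (m - H)

lemma psi_monomial (H m : ℕ) (a : Polynomial ℤ) :
    psi H (monomial m a) = C (a * qbinom m H) * X ^ (m - H) := by
  apply Polynomial.sum_monomial_index
  simp

lemma psi_add (H : ℕ) (f g : Polynomial (Polynomial ℤ)) :
    psi H (f + g) = psi H f + psi H g := by
  apply Polynomial.sum_add_index
  · simp
  · intro n a b; rw [add_mul, map_add, add_mul]

lemma psi_zero_map (H : ℕ) : psi H 0 = 0 := by simp [psi]

lemma psi_zero_eq (f : Polynomial (Polynomial ℤ)) : psi 0 f = f := by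
  conv_rhs => rw [← Polynomial.sum_C_mul_X_pow_eq f]
  unfold psi
  congr 1
  funext m c
  rw [qbinom_zero_right, mul_one, Nat.sub_zero]

lemma opD_monomial (m : ℕ) (a : Polynomial ℤ) :
    opD (monomial m a) = C (a * qnat m) * X ^ (m - 1) := by
  apply Polynomial.sum_monomial_index
  simp

lemma opD_add (f g : Polynomial (Polynomial ℤ)) : opD (f + g) = opD f + opD g := by
  apply Polynomial.sum_add_index
  · simp
  · intro n a b; rw [add_mul, map_add, add_mul]

lemma opU_add (f g : Polynomial (Polynomial ℤ)) : opU (f + g) = opU f + opU g := by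
  simp [opU, mul_add]

lemma opUU_monomial (m : ℕ) (a : Polynomial ℤ) :
    opU (opU (monomial m a)) = monomial (m + 2) a := by
  rw [opU, opU, X_mul_monomial, X_mul_monomial]

lemma psi_opA_monomial (H m : ℕ) (a : Polynomial ℤ) :
    psi H (opD (monomial m a) + opD (opU (opU (monomial m a)))) =
      C (a * qnat m * qbinom (m-1) H) * X^(m-1-H)
        + C (a * qnat (m+2) * qbinom (m+1) H) * X^(m+1-H) := by
  rw [opUU_monomial, opD_monomial, opD_monomial, psi_add,
    Polynomial.C_mul_X_pow_eq_monomial, Polynomial.C_mul_X_pow_eq_monomial,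
    psi_monomial, psi_monomial, show m+2-1 = m+1 from rfl]

set_option maxHeartbeats 1000000 in
lemma psi_op0 (m : ℕ) (a : Polynomial ℤ) :
    psi 0 (opD (monomial m a) + opD (opU (opU (monomial m a)))) =
      wUp 0 * psi 1 (monomial m a) + wLev 0 * psi 0 (monomial m a) := by
  rw [psi_opA_monomial, psi_monomial, psi_monomial]
  simp only [Nat.sub_zero, qbinom_zero_right, qbinom_one_right, mul_one]
  cases m with
  | zero =>
    have e2 : qnat 2 = 1 + X := by
      rw [show 2 = 1+1 from rfl, qnat_add, qnat_one, pow_one, mul_one]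
    have hc := congrArg (C : Polynomial ℤ →+* Polynomial (Polynomial ℤ)) e2
    simp only [map_add, map_one, map_mul, map_pow] at hc
    simp only [qnat_zero, mul_zero, zero_mul, map_zero, wUp, wLev, wStr, wWav, zero_add, qnat_one, mul_one,
      pow_zero, one_mul, map_add, map_mul, map_pow, map_one]
    linear_combination (C a * X) * hc
  | succ j =>
    have e2 : qnat (j+3) = X^2 * qnat (j+1) + (1 + X) := by
      rw [show j+3 = 2+(j+1) from by omega, qnat_add,
        show (2:ℕ) = 1+1 from rfl, qnat_add, qnat_one, pow_one, mul_one]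
      ring
    have hc := congrArg (C : Polynomial ℤ →+* Polynomial (Polynomial ℤ)) e2
    simp only [map_add, map_one, map_mul, map_pow] at hc
    simp only [Nat.add_sub_cancel, show j+1+1 = j+2 from rfl, show j+1+2 = j+3 from rfl,
      wUp, wLev, wStr, wWav, zero_add, qnat_one, mul_one, pow_zero, one_mul, map_add, map_mul, map_pow, map_one]
    linear_combination (C a * X^(j+2)) * hc

set_option maxHeartbeats 1000000 in
lemma psi_opS (H' m : ℕ) (a : Polynomial ℤ) :
    psi (H'+1) (opD (monomial m a) + opD (opU (opU (monomial m a)))) =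
      wUp (H'+1) * psi (H'+2) (monomial m a) + wLev (H'+1) * psi (H'+1) (monomial m a)
        + C (qnat (H'+2)) * psi H' (monomial m a) := by
  rw [psi_opA_monomial, psi_monomial, psi_monomial, psi_monomial]
  rcases Nat.lt_trichotomy m (H'+1) with hlt | heq | hgt
  · rcases Nat.lt_or_ge m H' with hlt' | hge'
    · rw [qbinom_eq_zero (m-1) (H'+1) (by omega), qbinom_eq_zero (m+1) (H'+1) (by omega),
        qbinom_eq_zero m (H'+1+1) (by omega), qbinom_eq_zero m (H'+1) (by omega),
        qbinom_eq_zero m H' (by omega)]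
      simp
    · -- m = H'
      have hm : m = H' := by omega
      subst hm
      rw [qbinom_eq_zero (m-1) (m+1) (by omega), show m+1 = m+1 from rfl, qbinom_self (m+1),
        qbinom_eq_zero m (m+1+1) (by omega), qbinom_eq_zero m (m+1) (by omega), qbinom_self m]
      simp only [mul_one, mul_zero, map_zero, zero_mul, mul_zero, add_zero, zero_add,
        Nat.sub_self, pow_zero, show m+1+1 = m+2 from rfl, map_mul]
      ring
  · -- m = H' + 1
    subst heq
    rw [show H'+1-1 = H' from by omega, qbinom_eq_zero H' (H'+1) (by omega),
      show H'+1+1 = H'+2 from rfl, qbinom_succ_self (H'+1),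
      qbinom_eq_zero (H'+1) (H'+2) (by omega), qbinom_self (H'+1), qbinom_succ_self H']
    have e : qnat (H'+3) = qnat (H'+1) + X^(H'+1) * (1+X) := by
      rw [show H'+3 = (H'+1)+2 from by omega, qnat_add (H'+1) 2,
        show (2:ℕ) = 1+1 from rfl, qnat_add 1 1, qnat_one, pow_one, mul_one]
    have hc := congrArg (C : Polynomial ℤ →+* Polynomial (Polynomial ℤ)) e
    simp only [map_add, map_one, map_mul, map_pow] at hc
    simp only [show H'+2+1 = H'+3 from rfl, show H'+1-(H'+1) = 0 from by omega,
      show H'+1+1-(H'+1) = 1 from by omega, show H'+1-H' = 1 from by omega,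
      wUp, wLev, wStr, wWav, pow_zero, mul_one, mul_zero, map_zero, zero_mul, add_zero,
      map_add, map_mul, map_pow, map_one, pow_one]
    linear_combination (C a * X * C (qnat (H'+2))) * hc
  · -- m ≥ H' + 2
    obtain ⟨j, rfl⟩ := Nat.exists_eq_add_of_lt hgt
    simp only [show H'+1+j+1-1-(H'+1) = j from by omega,
      show H'+1+j+1+1-(H'+1) = j+2 from by omega,
      show H'+1+j+1-(H'+1+1) = j from by omega,
      show H'+1+j+1-(H'+1) = j+1 from by omega,
      show H'+1+j+1-H' = j+2 from by omega,
      show H'+1+j+1-1 = H'+j+1 from by omega,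
      show H'+1+j+1+1 = H'+j+3 from by omega,
      show H'+1+j+1+2 = H'+j+4 from by omega,
      show H'+1+j+1 = H'+j+2 from by omega,
      show H'+j+2-1-(H'+1) = j from by omega,
      show H'+j+2-1 = H'+j+1 from by omega,
      show H'+j+2+1 = H'+j+3 from by omega,
      show H'+j+2+2 = H'+j+4 from by omega,
      show H'+j+2-(H'+1) = j+1 from by omega,
      show H'+j+2-(H'+2) = j from by omega,
      show H'+j+2-H' = j+2 from by omega,
      show H'+j+2+1-(H'+1) = j+2 from by omega,
      show H'+j+1-(H'+1) = j from by omega,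
      show H'+1+1 = H'+2 from rfl]
    have h1 := I1 (H'+j+2) (H'+1)
    rw [show H'+1+1 = H'+2 from rfl, show H'+j+2-1 = H'+j+1 from by omega] at h1
    have h2 := I2 H' j
    have hc1 := congrArg (C : Polynomial ℤ →+* Polynomial (Polynomial ℤ)) h1
    have hc2 := congrArg (C : Polynomial ℤ →+* Polynomial (Polynomial ℤ)) h2
    simp only [map_add, map_one, map_mul, map_pow] at hc1 hc2
    simp only [wUp, wLev, wStr, wWav, show 2*(H'+1)+2 = 2*H'+4 from by omega,
      map_add, map_mul, map_pow, map_one]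
    linear_combination (-(C a * X^j)) * hc1 + (C a * X^(j+2)) * hc2

lemma psi_op_zero (f : Polynomial (Polynomial ℤ)) :
    psi 0 (opD f + opD (opU (opU f))) = wUp 0 * psi 1 f + wLev 0 * psi 0 f := by
  induction f using Polynomial.induction_on' with
  | add p q hp hq =>
    have e : opD (p + q) + opD (opU (opU (p + q)))
        = (opD p + opD (opU (opU p))) + (opD q + opD (opU (opU q))) := by
      rw [opU_add, opU_add, opD_add, opD_add]; ring
    rw [e, psi_add, hp, hq, psi_add, psi_add]
    ring
  | monomial m a => exact psi_op0 m a

lemma psi_op_succ (H' : ℕ) (f : Polynomial (Polynomial ℤ)) :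
    psi (H'+1) (opD f + opD (opU (opU f))) =
      wUp (H'+1) * psi (H'+2) f + wLev (H'+1) * psi (H'+1) f + C (qnat (H'+2)) * psi H' f := by
  induction f using Polynomial.induction_on' with
  | add p q hp hq =>
    have e : opD (p + q) + opD (opU (opU (p + q)))
        = (opD p + opD (opU (opU p))) + (opD q + opD (opU (opU q))) := by
      rw [opU_add, opU_add, opD_add, opD_add]; ring
    rw [e, psi_add, hp, hq, psi_add, psi_add, psi_add]
    ring
  | monomial m a => exact psi_opS H' m a

lemma Rpoly_succ (n : ℕ) : Rpoly (n+1) = opD (Rpoly n) + opD (opU (opU (Rpoly n))) := by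
  rw [Rpoly, Function.iterate_succ_apply']
  rfl

lemma psi_Rpoly (n : ℕ) : ∀ H : ℕ, psi H (Rpoly n) = vv n H := by
  induction n with
  | zero =>
    intro H
    have h1 : (1 : Polynomial (Polynomial ℤ)) = monomial 0 1 := by
      simp [Polynomial.monomial_zero_one]
    rw [Rpoly, Function.iterate_zero_apply, h1, psi_monomial]
    cases H with
    | zero => simp [vv, qbinom_zero_right]
    | succ H' => simp [vv, qbinom_eq_zero 0 (H'+1) (by omega)]
  | succ n ih =>
    intro H
    rw [Rpoly_succ]
    cases H with
    | zero => rw [psi_op_zero, ih, ih, vv]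
    | succ H' => rw [psi_op_succ, ih, ih, ih, vv]

lemma Rpoly_eq_vv (n : ℕ) : Rpoly n = vv n 0 := by
  rw [← psi_Rpoly n 0, psi_zero_eq]

/-- Proposition 2.2: for `n ≥ 0`, `ρ(T_n) = R_n(t,q)` in `ℤ[t,q]`. -/
theorem statement10 (n : ℕ) :
    (∑ᶠ μ ∈ {μ : WPath n | Tcond μ}, rho μ) = Rpoly n := by
  have hset : {μ : WPath n | Tcond μ} = TS n 0 := by
    ext μ; exact Tcond_iff μ
  rw [hset, sum_TS n 0]
  exact (Rpoly_eq_vv n).symm
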